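/- Let H be a simple hypergraph with e-index k and characteristic polynomial of U(H) equal to x^k + c_1 x^{k-1} + ... + c_k. Then c_2 = (1/2)·(∂(H) − Σ_{S ∈ I(H)} d_H(S)), i.e., the sum of all 2×2 principal minors of U(H) equals this quantity. -/

import Mathlib

variable {V : Type} [Fintype V] [DecidableEq V]

/-- A finite hypergraph: a finite vertex set and a multiset of nonempty edges. -/
structure Hypergraph' (V : Type) [Fintype V] [DecidableEq V] where
  verts : Finset V
  edges : Multiset (Finset V)
  edges_sub : ∀ e ∈ edges, e ⊆ verts
  edges_nonempty : ∀ e ∈ edges, e.Nonempty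

open Classical in
/-- `IH H` is `I(H)`: all parts of 2-partitions of edges plus all singletons of `V(H)`. -/
noncomputable def IH (H : Hypergraph' V) : Finset (Finset V) :=
  Finset.univ.filter fun S =>
    (S.Nonempty ∧ ∃ e ∈ H.edges, S ⊂ e) ∨ ∃ v ∈ H.verts, S = {v}

/-- The unified matrix of a hypergraph, indexed by `I(H)`. -/
noncomputable def U (H : Hypergraph' V) : Matrix ↥(IH H) ↥(IH H) ℝ := fun S T =>
  if (S : Finset V) = (T : Finset V) then
    (if (S : Finset V).card = 1 then (H.edges.count (S : Finset V) : ℝ) else 0)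
  else if Disjoint (S : Finset V) (T : Finset V) then
    (H.edges.count ((S : Finset V) ∪ (T : Finset V)) : ℝ)
  else 0

/-- Degree of a vertex: number of edges (with multiplicity) containing it. -/
def deg (H : Hypergraph' V) (v : V) : ℕ := (H.edges.filter (fun e => v ∈ e)).card

/-- Unified degree of a set `S`: number of edges (with multiplicity) containing `S`. -/
def udeg (H : Hypergraph' V) (S : Finset V) : ℕ := (H.edges.filter (fun e => S ⊆ e)).card

/-- `incl H` = ∂(H): number of edges of cardinality ≥ 2 properly contained in another edge. -/
noncomputable def incl (H : Hypergraph' V) : ℕ :=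
  Multiset.card (H.edges.filter (fun e => 2 ≤ e.card ∧ ∃ e' ∈ H.edges, e ⊂ e'))

/-- A hypergraph is simple if it has no multiple edges and no loops. -/
def Simple (H : Hypergraph' V) : Prop :=
  H.edges.Nodup ∧ ∀ e ∈ H.edges, 2 ≤ e.card

/-- `tau S` = τ(S): the set of unordered 2-partitions of `S`. -/
def tau (S : Finset V) : Finset (Finset (Finset V)) :=
  (S.powerset.filter fun A => A.Nonempty ∧ A ⊂ S).image fun A => {A, S \ A}



section MatrixAux

open Finset Matrix Polynomial Equiv

variable {n : Type*} [Fintype n] [DecidableEq n]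

theorem coeff_prod_charmatrix_eq_zero (A : Matrix n n ℝ) {σ : Equiv.Perm n}
    (h : 3 ≤ σ.support.card) :
    (∏ i, (charmatrix A) (σ i) i).coeff (Fintype.card n - 2) = 0 := by
  apply Polynomial.coeff_eq_zero_of_natDegree_lt
  have h1 : (∏ i, (charmatrix A) (σ i) i).natDegree ≤ ∑ i, ((charmatrix A) (σ i) i).natDegree :=
    Polynomial.natDegree_prod_le _ _
  have h2 : ∑ i, ((charmatrix A) (σ i) i).natDegree ≤ ∑ i, ite (σ i = i) 1 0 := by
    apply Finset.sum_le_sum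
    intros i _
    exact Matrix.charmatrix_apply_natDegree_le _ _
  have h3 : ∑ i : n, ite (σ i = i) 1 0 = (Finset.univ.filter (fun i => σ i = i)).card := by
    rw [← Finset.sum_filter]
    exact (Finset.card_eq_sum_ones _).symm
  have h4 : (Finset.univ.filter (fun i => σ i = i)).card = Fintype.card n - σ.support.card := by
    have : σ.support = Finset.univ.filter (fun i => ¬ σ i = i) := by
      ext i; simp [Equiv.Perm.mem_support]
    have hc := Finset.card_filter_add_card_filter_not (s := (Finset.univ : Finset n)) (p := fun i => σ i = i)
    rw [this]
    rw [Finset.card_univ] at hc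
    omega
  have hn : 3 ≤ Fintype.card n := le_trans h (Finset.card_le_univ _)
  omega

theorem prod_charmatrix_swap (A : Matrix n n ℝ) (hd : ∀ i, A i i = 0) {i j : n} (hij : i ≠ j) :
    (∏ k, (charmatrix A) ((Equiv.swap i j) k) k) =
      Polynomial.C (A i j * A j i) * Polynomial.X ^ (Fintype.card n - 2) := by
  have hsub : ({i, j} : Finset n) ⊆ Finset.univ := Finset.subset_univ _
  rw [← Finset.prod_sdiff hsub]
  have h1 : ∏ k ∈ ({i,j} : Finset n), (charmatrix A) ((Equiv.swap i j) k) k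
      = Polynomial.C (A i j * A j i) := by
    rw [Finset.prod_pair hij]
    rw [Equiv.swap_apply_left, Equiv.swap_apply_right]
    rw [charmatrix_apply_ne _ _ _ hij.symm, charmatrix_apply_ne _ _ _ hij]
    rw [neg_mul_neg, ← Polynomial.C_mul, mul_comm]
  have h2 : ∏ k ∈ Finset.univ \ ({i,j} : Finset n), (charmatrix A) ((Equiv.swap i j) k) k
      = Polynomial.X ^ (Fintype.card n - 2) := by
    rw [Finset.prod_congr rfl (fun k hk => ?_)]
    · rw [Finset.prod_const]
      congr 1
      rw [Finset.card_sdiff_of_subset hsub, Finset.card_univ, Finset.card_pair hij]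
    · simp only [Finset.mem_sdiff, Finset.mem_insert, Finset.mem_singleton] at hk
      push_neg at hk
      rw [Equiv.swap_apply_of_ne_of_ne hk.2.1 hk.2.2, charmatrix_apply_eq, hd, map_zero, sub_zero]
  rw [h1, h2, mul_comm]

theorem charpoly_coeff_sub_two (A : Matrix n n ℝ) (hd : ∀ i, A i i = 0)
    (hn : 1 ≤ Fintype.card n) :
    A.charpoly.coeff (Fintype.card n - 2) =
      -(1/2) * ∑ p ∈ Finset.univ.offDiag, A p.1 p.2 * A p.2 p.1 := by
  classical
  set k := Fintype.card n - 2 with hk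
  have hdet : A.charpoly.coeff k
      = ∑ σ : Equiv.Perm n, ((Equiv.Perm.sign σ : ℤ) : ℝ)
          * (∏ i, (charmatrix A) (σ i) i).coeff k := by
    rw [Matrix.charpoly, Matrix.det_apply', Polynomial.finset_sum_coeff]
    refine Finset.sum_congr rfl (fun σ _ => ?_)
    rw [show ((Equiv.Perm.sign σ : ℤ) : Polynomial ℝ) = Polynomial.C ((Equiv.Perm.sign σ : ℤ) : ℝ) by
      push_cast; rfl]
    rw [Polynomial.coeff_C_mul]
  rw [hdet]
  rw [← Finset.sum_filter_add_sum_filter_not Finset.univ (fun σ : Equiv.Perm n => σ.support.card = 2)]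
  have hzero : ∑ σ ∈ Finset.univ.filter (fun σ : Equiv.Perm n => ¬ σ.support.card = 2),
      ((Equiv.Perm.sign σ : ℤ) : ℝ) * (∏ i, (charmatrix A) (σ i) i).coeff k = 0 := by
    apply Finset.sum_eq_zero
    intro σ hσ
    simp only [Finset.mem_filter] at hσ
    have h2 : σ.support.card ≠ 2 := hσ.2
    rcases lt_or_ge σ.support.card 2 with hlt | hge
    · -- card 0 or 1; 1 impossible, so σ = 1
      have h1 : σ = 1 := by
        have := Equiv.Perm.card_support_ne_one σ
        have h0 : σ.support.card = 0 := by omega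
        exact Equiv.Perm.card_support_eq_zero.mp h0
      subst h1
      have : (∏ i, (charmatrix A) ((1 : Equiv.Perm n) i) i) = Polynomial.X ^ (Fintype.card n) := by
        simp only [Equiv.Perm.one_apply]
        calc ∏ i, (charmatrix A) i i = ∏ i : n, Polynomial.X := by
              refine Finset.prod_congr rfl (fun i _ => ?_)
              rw [charmatrix_apply_eq, hd, map_zero, sub_zero]
          _ = Polynomial.X ^ (Fintype.card n) := by rw [Finset.prod_const, Finset.card_univ]
        
      rw [this, Polynomial.coeff_X_pow, if_neg (by omega), mul_zero]
    · have h3 : 3 ≤ σ.support.card := by omega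
      rw [coeff_prod_charmatrix_eq_zero A h3, mul_zero]
  rw [hzero, add_zero]
  -- now the swaps part
  have hfib := Finset.sum_fiberwise_of_maps_to
    (g := fun p : n × n => Equiv.swap p.1 p.2)
    (s := Finset.univ.offDiag)
    (t := Finset.univ.filter (fun σ : Equiv.Perm n => σ.support.card = 2))
    (f := fun p : n × n => A p.1 p.2 * A p.2 p.1)
    (fun p hp => by
      simp only [Finset.mem_offDiag] at hp
      simp only [Finset.mem_filter, Finset.mem_univ, true_and]
      exact Equiv.Perm.card_support_swap hp.2.2)
  rw [← hfib, Finset.mul_sum]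
  refine Finset.sum_congr rfl (fun σ hσ => ?_)
  simp only [Finset.mem_filter, Finset.mem_univ, true_and] at hσ
  obtain ⟨i, j, hij, rfl⟩ := Equiv.Perm.card_support_eq_two.mp hσ
  have hfiber : (Finset.univ.offDiag.filter (fun p : n × n => Equiv.swap p.1 p.2 = Equiv.swap i j))
      = {(i, j), (j, i)} := by
    ext p
    simp only [Finset.mem_filter, Finset.mem_offDiag, Finset.mem_univ, true_and,
      Finset.mem_insert, Finset.mem_singleton]
    constructor
    · rintro ⟨hne, heq⟩
      have hsupp : ({p.1, p.2} : Finset n) = {i, j} := by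
        rw [← Equiv.Perm.support_swap hne, ← Equiv.Perm.support_swap hij, heq]
      have h1 : p.1 = i ∨ p.1 = j := by
        have := hsupp ▸ (Finset.mem_insert_self p.1 {p.2}); simpa using this
      have h2 : p.2 = i ∨ p.2 = j := by
        have := hsupp ▸ (Finset.mem_insert_of_mem (Finset.mem_singleton_self p.2))
        simpa using this
      rcases h1 with h1 | h1 <;> rcases h2 with h2 | h2
      · exact absurd (h1.trans h2.symm) hne
      · left; exact Prod.ext h1 h2
      · right; exact Prod.ext h1 h2
      · exact absurd (h1.trans h2.symm) hne
    · rintro (rfl | rfl)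
      · exact ⟨hij, rfl⟩
      · exact ⟨hij.symm, Equiv.swap_comm j i⟩
  rw [hfiber, Finset.sum_pair (by simp [hij] : ((i,j) : n × n) ≠ (j,i))]
  rw [prod_charmatrix_swap A hd hij, Polynomial.coeff_C_mul, Polynomial.coeff_X_pow, if_pos rfl,
    Equiv.Perm.sign_swap hij]
  push_cast
  ring

end MatrixAux

theorem mem_IH_iff {H : Hypergraph' V} {S : Finset V} :
    S ∈ IH H ↔ (S.Nonempty ∧ ∃ e ∈ H.edges, S ⊂ e) ∨ ∃ v ∈ H.verts, S = {v} := by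
  classical
  simp [IH]

theorem IH_nonempty {H : Hypergraph' V} {S : Finset V} (h : S ∈ IH H) : S.Nonempty := by
  rcases mem_IH_iff.mp h with ⟨hne, _⟩ | ⟨v, _, rfl⟩
  · exact hne
  · exact Finset.singleton_nonempty v

theorem mem_IH_of_ssub {H : Hypergraph' V} {S e : Finset V} (he : e ∈ H.edges)
    (hne : S.Nonempty) (hsub : S ⊂ e) : S ∈ IH H :=
  mem_IH_iff.mpr (Or.inl ⟨hne, e, he, hsub⟩)

-- counting lemma per edge: number of ordered 2-partitions
theorem tsum_eq {H : Hypergraph' V} {e : Finset V} (he : e ∈ H.edges) (S : Finset V)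
    (hS : S ∈ IH H) :
    (∑ T ∈ IH H, if Disjoint S T ∧ S ∪ T = e ∧ S ≠ T then 1 else 0) =
      if S.Nonempty ∧ S ⊂ e then 1 else 0 := by
  classical
  by_cases h : S.Nonempty ∧ S ⊂ e
  · rw [if_pos h]
    have hTmem : e \ S ∈ IH H := by
      refine mem_IH_of_ssub he ?_ ?_
      · obtain ⟨x, hx⟩ := Finset.exists_of_ssubset h.2
        exact ⟨x, Finset.mem_sdiff.mpr ⟨hx.1, hx.2⟩⟩
      · constructor
        · exact Finset.sdiff_subset
        · intro hcon
          obtain ⟨y, hy⟩ := h.1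
          have := Finset.mem_sdiff.mp (hcon (h.2.1 hy))
          exact this.2 hy
    rw [Finset.sum_eq_single_of_mem (e \ S) hTmem]
    · rw [if_pos]
      refine ⟨Finset.disjoint_sdiff, Finset.union_sdiff_of_subset h.2.1, ?_⟩
      intro hcon
      obtain ⟨y, hy⟩ := h.1
      have : y ∈ e \ S := hcon ▸ hy
      exact (Finset.mem_sdiff.mp this).2 hy
    · intro T _ hT
      rw [if_neg]
      rintro ⟨hdisj, hunion, -⟩
      apply hT
      have : T ⊆ e := hunion ▸ Finset.subset_union_right
      apply Finset.Subset.antisymm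
      · intro x hx
        rw [Finset.mem_sdiff]
        exact ⟨this hx, fun hxS => (Finset.disjoint_left.mp hdisj hxS) hx⟩
      · intro x hx
        rw [Finset.mem_sdiff] at hx
        rcases Finset.mem_union.mp (hunion ▸ (show x ∈ e from hx.1) : x ∈ S ∪ T) with h1 | h1
        · exact absurd h1 hx.2
        · exact h1
  · rw [if_neg h]
    apply Finset.sum_eq_zero
    intro T hTm
    rw [if_neg]
    rintro ⟨hdisj, hunion, -⟩
    apply h
    refine ⟨IH_nonempty hS, ?_, ?_⟩
    · exact hunion ▸ Finset.subset_union_left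
    · intro hcon
      obtain ⟨y, hy⟩ := IH_nonempty hTm
      have hye : y ∈ e := hunion ▸ Finset.mem_union_right S hy
      exact Finset.disjoint_right.mp hdisj hy (hcon hye)

theorem filter_proper_eq {H : Hypergraph' V} {e : Finset V} (he : e ∈ H.edges) :
    (IH H).filter (fun S => S.Nonempty ∧ S ⊂ e) =
      e.powerset.filter (fun S => S.Nonempty ∧ S ≠ e) := by
  classical
  ext S
  simp only [Finset.mem_filter, Finset.mem_powerset]
  constructor
  · rintro ⟨-, hne, hss⟩
    exact ⟨hss.1, hne, hss.ne⟩
  · rintro ⟨hsub, hne, hneq⟩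
    have hss : S ⊂ e := lt_of_le_of_ne hsub hneq
    exact ⟨mem_IH_of_ssub he hne hss, hne, hss⟩

theorem card_proper {H : Hypergraph' V} {e : Finset V} (he : e ∈ H.edges)
    (hcard : 2 ≤ e.card) :
    (∑ S ∈ IH H, if S.Nonempty ∧ S ⊂ e then 1 else 0) = 2 ^ e.card - 2 := by
  classical
  rw [← Finset.card_filter, filter_proper_eq he]
  have hene : e ≠ ∅ := by
    intro hcon
    rw [hcon] at hcard
    simp at hcard
  have hset : e.powerset.filter (fun S => S.Nonempty ∧ S ≠ e) = e.powerset \ {∅, e} := by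
    ext S
    simp only [Finset.mem_filter, Finset.mem_powerset, Finset.mem_sdiff, Finset.mem_insert,
      Finset.mem_singleton, Finset.nonempty_iff_ne_empty]
    tauto
  rw [hset, Finset.card_sdiff_of_subset, Finset.card_powerset, Finset.card_pair (Ne.symm hene)]
  intro S hS
  rw [Finset.mem_powerset]
  rcases Finset.mem_insert.mp hS with rfl | hS
  · exact Finset.empty_subset e
  · rw [Finset.mem_singleton.mp hS]

theorem udeg_side {H : Hypergraph' V} (hs : Simple H) {e : Finset V} (he : e ∈ H.edges) :
    (∑ S ∈ IH H, if S ⊆ e then 1 else 0) =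
      (2 ^ e.card - 2) + (if ∃ e' ∈ H.edges, e ⊂ e' then 1 else 0) := by
  classical
  have hcard : 2 ≤ e.card := hs.2 e he
  have hsplit : ∀ S ∈ IH H, (if S ⊆ e then 1 else 0) =
      (if S.Nonempty ∧ S ⊂ e then 1 else 0) +
      (if S = e ∧ ∃ e' ∈ H.edges, e ⊂ e' then 1 else 0) := by
    intro S hS
    by_cases hsub : S ⊆ e
    · rw [if_pos hsub]
      by_cases heq : S = e
      · subst heq
        rw [if_neg (fun h => (lt_irrefl _ h.2 : False)), if_pos]
        refine ⟨rfl, ?_⟩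
        rcases mem_IH_iff.mp hS with ⟨-, e'', he'', hss⟩ | ⟨v, -, hv⟩
        · exact ⟨e'', he'', hss⟩
        · rw [hv] at hcard
          simp at hcard
      · rw [if_pos ⟨IH_nonempty hS, lt_of_le_of_ne hsub heq⟩, if_neg (fun h => heq h.1)]
    · rw [if_neg hsub, if_neg, if_neg]
      · rintro ⟨heq, -⟩
        exact hsub (le_of_eq heq)
      · rintro ⟨-, hss⟩
        exact hsub hss.1
  rw [Finset.sum_congr rfl hsplit, Finset.sum_add_distrib]
  congr 1
  · exact card_proper he hcard
  · by_cases hex : ∃ e' ∈ H.edges, e ⊂ e'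
    · rw [if_pos hex]
      have heIH : e ∈ IH H := by
        obtain ⟨e', he', hss⟩ := hex
        exact mem_IH_of_ssub he' (H.edges_nonempty e he) hss
      rw [Finset.sum_congr rfl (fun S _ => by rw [show (if S = e ∧ ∃ e' ∈ H.edges, e ⊂ e' then 1 else 0) = if S = e then 1 else 0 from by by_cases h : S = e <;> simp [h, hex]])]
      rw [Finset.sum_ite_eq' (IH H) e (fun _ => 1), if_pos heIH]
    · rw [if_neg hex]
      apply Finset.sum_eq_zero
      intro S _
      rw [if_neg (fun h => hex h.2)]

theorem key_count {H : Hypergraph' V} (hs : Simple H) :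
    (∑ S ∈ IH H, ∑ T ∈ IH H,
        if Disjoint S T ∧ S ∪ T ∈ H.edges.toFinset ∧ S ≠ T then 1 else 0) + incl H =
      ∑ S ∈ IH H, udeg H S := by
  classical
  -- rewrite double sum as a triple sum over edges
  have step1 : ∀ S ∈ IH H, ∀ T ∈ IH H,
      (if Disjoint S T ∧ S ∪ T ∈ H.edges.toFinset ∧ S ≠ T then 1 else 0) =
        ∑ e ∈ H.edges.toFinset, if Disjoint S T ∧ S ∪ T = e ∧ S ≠ T then (1:ℕ) else 0 := by
    intro S _ T _
    by_cases h1 : Disjoint S T ∧ S ≠ T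
    · by_cases h2 : S ∪ T ∈ H.edges.toFinset
      · rw [if_pos ⟨h1.1, h2, h1.2⟩]
        rw [Finset.sum_congr rfl (fun e _ => show (if Disjoint S T ∧ S ∪ T = e ∧ S ≠ T then (1:ℕ) else 0) = if S ∪ T = e then 1 else 0 from by by_cases h : S ∪ T = e <;> simp [h, h1.1, h1.2])]
        rw [Finset.sum_ite_eq H.edges.toFinset (S ∪ T) (fun _ => 1), if_pos h2]
      · rw [if_neg (fun h => h2 h.2.1)]
        symm; apply Finset.sum_eq_zero
        intro e he
        rw [if_neg]
        rintro ⟨-, heq, -⟩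
        exact h2 (heq ▸ he)
    · rw [if_neg (fun h => h1 ⟨h.1, h.2.2⟩)]
      symm; apply Finset.sum_eq_zero
      intro e _
      rw [if_neg]
      rintro ⟨hd, -, hne⟩
      exact h1 ⟨hd, hne⟩
  rw [Finset.sum_congr rfl (fun S hS => Finset.sum_congr rfl (fun T hT => step1 S hS T hT))]
  -- swap sums so that e is outermost
  have step2 : (∑ S ∈ IH H, ∑ T ∈ IH H, ∑ e ∈ H.edges.toFinset,
      if Disjoint S T ∧ S ∪ T = e ∧ S ≠ T then (1:ℕ) else 0)
      = ∑ e ∈ H.edges.toFinset, ∑ S ∈ IH H, ∑ T ∈ IH H,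
        if Disjoint S T ∧ S ∪ T = e ∧ S ≠ T then (1:ℕ) else 0 := by
    rw [Finset.sum_congr rfl (fun S (_ : S ∈ IH H) => Finset.sum_comm)]
    exact Finset.sum_comm
  rw [step2]
  have step3 : ∀ e ∈ H.edges.toFinset, (∑ S ∈ IH H, ∑ T ∈ IH H,
      if Disjoint S T ∧ S ∪ T = e ∧ S ≠ T then (1:ℕ) else 0) = 2 ^ e.card - 2 := by
    intro e he
    rw [Multiset.mem_toFinset] at he
    rw [Finset.sum_congr rfl (fun S hS => tsum_eq he S hS)]
    exact card_proper he (hs.2 e he)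
  rw [Finset.sum_congr rfl step3]
  -- incl as a sum over edges
  have hnodup : H.edges.Nodup := hs.1
  have hincl : incl H = ∑ e ∈ H.edges.toFinset, if ∃ e' ∈ H.edges, e ⊂ e' then 1 else 0 := by
    rw [incl]
    rw [show H.edges.filter (fun e => 2 ≤ e.card ∧ ∃ e' ∈ H.edges, e ⊂ e')
        = H.edges.filter (fun e => ∃ e' ∈ H.edges, e ⊂ e') from
      Multiset.filter_congr (fun e he => by simp [hs.2 e he])]
    rw [← Multiset.toFinset_card_of_nodup (Multiset.Nodup.filter _ hnodup),
      Multiset.toFinset_filter, Finset.card_filter]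
  have hudeg : ∀ S : Finset V, udeg H S = ∑ e ∈ H.edges.toFinset, if S ⊆ e then 1 else 0 := by
    intro S
    rw [udeg, ← Multiset.toFinset_card_of_nodup (Multiset.Nodup.filter _ hnodup),
      Multiset.toFinset_filter, Finset.card_filter]
  rw [hincl, ← Finset.sum_add_distrib]
  rw [Finset.sum_congr rfl (fun S (_ : S ∈ IH H) => hudeg S), Finset.sum_comm]
  refine Finset.sum_congr rfl (fun e he => ?_)
  exact ((udeg_side hs (Multiset.mem_toFinset.mp he))).symm ▸ rfl

theorem U_diag_zero {H : Hypergraph' V} (hs : Simple H) (a : ↥(IH H)) : U H a a = 0 := by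
  rw [U, if_pos rfl]
  by_cases h : (a : Finset V).card = 1
  · rw [if_pos h]
    rw [Multiset.count_eq_zero_of_notMem, Nat.cast_zero]
    intro hmem
    have := hs.2 _ hmem
    omega
  · rw [if_neg h]

theorem offDiag_sum_eq {H : Hypergraph' V} (hs : Simple H) :
    ∑ p ∈ (Finset.univ : Finset ↥(IH H)).offDiag, U H p.1 p.2 * U H p.2 p.1 =
      ((∑ S ∈ IH H, ∑ T ∈ IH H,
        if Disjoint S T ∧ S ∪ T ∈ H.edges.toFinset ∧ S ≠ T then 1 else 0 : ℕ) : ℝ) := by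
  classical
  have hcount_le : ∀ a : Finset V, H.edges.count a ≤ 1 :=
    Multiset.nodup_iff_count_le_one.mp hs.1
  rw [show (Finset.univ : Finset ↥(IH H)).offDiag = (Finset.univ ×ˢ Finset.univ).filter (fun a => a.1 ≠ a.2) by ext p; simp [Finset.mem_offDiag], Finset.sum_filter, Finset.sum_product]
  have hpt : ∀ a b : ↥(IH H),
      (if a ≠ b then U H a b * U H b a else 0) =
        ((if Disjoint (a : Finset V) (b : Finset V) ∧
            (a : Finset V) ∪ (b : Finset V) ∈ H.edges.toFinset ∧
            (a : Finset V) ≠ (b : Finset V) then 1 else 0 : ℕ) : ℝ) := by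
    intro a b
    by_cases hab : (a : Finset V) = (b : Finset V)
    · rw [if_neg (by simp [Subtype.ext hab]), if_neg (by tauto), Nat.cast_zero]
    · have hab' : a ≠ b := fun h => hab (congrArg _ h)
      rw [if_pos hab']
      by_cases hdisj : Disjoint (a : Finset V) (b : Finset V)
      · rw [U, U, if_neg hab, if_neg (Ne.symm hab), if_pos hdisj,
          if_pos hdisj.symm, Finset.union_comm (b : Finset V) (a : Finset V)]
        have hc := hcount_le ((a : Finset V) ∪ (b : Finset V))
        rcases Nat.le_one_iff_eq_zero_or_eq_one.mp hc with h | h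
        · rw [h, if_neg]
          · norm_num
          · rintro ⟨-, hm, -⟩
            exact (Multiset.count_eq_zero.mp h) (Multiset.mem_toFinset.mp hm)
        · rw [h, if_pos ⟨hdisj, Multiset.mem_toFinset.mpr
            (by rw [← Multiset.count_pos, h]; norm_num), hab⟩]
          norm_num
      · rw [U, if_neg hab, if_neg hdisj, zero_mul, if_neg (by tauto), Nat.cast_zero]
  rw [Finset.sum_congr rfl (fun a _ => Finset.sum_congr rfl (fun b _ => hpt a b))]
  push_cast
  have hconv : ∀ (g : Finset V → Finset V → ℝ),
      (∑ x : ↥(IH H), ∑ y : ↥(IH H), g ↑x ↑y) = ∑ x ∈ IH H, ∑ y ∈ IH H, g x y := by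
    intro g
    calc ∑ x : ↥(IH H), ∑ y : ↥(IH H), g ↑x ↑y
        = ∑ x : ↥(IH H), ∑ y ∈ IH H, g ↑x y :=
          Finset.sum_congr rfl (fun x _ => Finset.sum_coe_sort (IH H) (g ↑x))
      _ = ∑ x ∈ IH H, ∑ y ∈ IH H, g x y := Finset.sum_coe_sort (IH H) (fun S => ∑ y ∈ IH H, g S y)
  exact hconv (fun S T => if Disjoint S T ∧ S ∪ T ∈ H.edges.toFinset ∧ S ≠ T then 1 else 0)


theorem charpoly_coeff_two (H : Hypergraph' V) (hs : Simple H) (hV : H.verts.Nonempty) :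
    ((U H).charpoly).coeff (Fintype.card ↥(IH H) - 2) =
      (1/2 : ℝ) * ((incl H : ℝ) - ∑ S ∈ IH H, (udeg H S : ℝ)) := by
  have hcard : 1 ≤ Fintype.card ↥(IH H) := by
    rw [Fintype.card_coe]
    obtain ⟨v, hv⟩ := hV
    have : ({v} : Finset V) ∈ IH H := mem_IH_iff.mpr (Or.inr ⟨v, hv, rfl⟩)
    exact Finset.card_pos.mpr ⟨{v}, this⟩
  rw [charpoly_coeff_sub_two (U H) (U_diag_zero hs) hcard, offDiag_sum_eq hs]
  have hkey := key_count hs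
  have hkey' := congrArg (Nat.cast : ℕ → ℝ) hkey
  push_cast at hkey' ⊢
  linarith
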